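/- Let x* be a detailed-balance stationary state with consensus edge set L= (r > 0). If Σ_{(i,j)∈L=} ω_ij < 2/3 then the Jacobian r(Q= − 2Q≠) is negative definite on the complement of the constant vector (x* is stable); if max_{(i,j)∈L=} ω_ij > 2/3 then the Jacobian has a positive eigenvalue (x* is unstable). -/

import Mathlib

open Finset Matrix Polynomial
open scoped Classical

/-- Right-hand side of the dynamics `dx_i/dt = Σ_{j~i} (r(x_i-x_j) - (x_i-x_j)^3)`. -/
noncomputable def rhs {N : ℕ} (G : SimpleGraph (Fin N)) (r : ℝ) (x : Fin N → ℝ) (i : Fin N) : ℝ :=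
  ∑ j ∈ G.neighborFinset i, (r * (x i - x j) - (x i - x j) ^ 3)

/-- Graph Laplacian matrix. -/
noncomputable def lap {N : ℕ} (G : SimpleGraph (Fin N)) : Matrix (Fin N) (Fin N) ℝ :=
  fun i j => if i = j then (G.degree i : ℝ) else if G.Adj i j then -1 else 0

/-- Laplacian of the subgraph of consensus edges (edges with `x i = x j`). -/
noncomputable def lapEq {N : ℕ} (G : SimpleGraph (Fin N)) (x : Fin N → ℝ) :
    Matrix (Fin N) (Fin N) ℝ :=
  fun i j => if i = j then (((G.neighborFinset i).filter (fun k => x i = x k)).card : ℝ)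
    else if G.Adj i j ∧ x i = x j then -1 else 0

/-- Laplacian of the subgraph of dissensus edges (edges with `x i ≠ x j`). -/
noncomputable def lapNe {N : ℕ} (G : SimpleGraph (Fin N)) (x : Fin N → ℝ) :
    Matrix (Fin N) (Fin N) ℝ :=
  fun i j => if i = j then (((G.neighborFinset i).filter (fun k => x i ≠ x k)).card : ℝ)
    else if G.Adj i j ∧ x i ≠ x j then -1 else 0

/-- `Qp` is the Moore–Penrose pseudoinverse of `Q`. -/
def IsMP {N : ℕ} (Q Qp : Matrix (Fin N) (Fin N) ℝ) : Prop :=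
  Q * Qp * Q = Q ∧ Qp * Q * Qp = Qp ∧ (Q * Qp)ᵀ = Q * Qp ∧ (Qp * Q)ᵀ = Qp * Q

/-- The indicator difference vector `e_i - e_j`. -/
noncomputable def ev {N : ℕ} (i j : Fin N) : Fin N → ℝ := Pi.single i 1 - Pi.single j 1

/-- Effective resistance `ω_ij = (e_i-e_j)ᵀ Q⁺ (e_i-e_j)` given a pseudoinverse `Qp` of `Q`. -/
noncomputable def effRes {N : ℕ} (Qp : Matrix (Fin N) (Fin N) ℝ) (i j : Fin N) : ℝ :=
  ev i j ⬝ᵥ (Qp *ᵥ ev i j)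

/-- A detailed-balance state: every edge difference lies in `{0, √r, -√r}`. -/
def DetailedBalance {N : ℕ} (G : SimpleGraph (Fin N)) (r : ℝ) (x : Fin N → ℝ) : Prop :=
  ∀ i j, G.Adj i j → (x i - x j = 0 ∨ x i - x j = Real.sqrt r ∨ x i - x j = - Real.sqrt r)

/-- `M` is negative definite on the subspace orthogonal to the constant vector. -/
def NegDefOrth {N : ℕ} (M : Matrix (Fin N) (Fin N) ℝ) : Prop :=
  ∀ z : Fin N → ℝ, z ≠ 0 → ∑ k, z k = 0 → z ⬝ᵥ (M *ᵥ z) < 0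

/-- `M` has a positive eigenvalue. -/
def HasPosEig {N : ℕ} (M : Matrix (Fin N) (Fin N) ℝ) : Prop :=
  ∃ (μ : ℝ) (z : Fin N → ℝ), 0 < μ ∧ z ≠ 0 ∧ M *ᵥ z = μ • z

/-- The Jacobian of the dynamics `rhs` at a state `x`, defined entrywise via partial
derivatives. -/
noncomputable def jac {N : ℕ} (G : SimpleGraph (Fin N)) (r : ℝ) (x : Fin N → ℝ) :
    Matrix (Fin N) (Fin N) ℝ :=
  fun i j => deriv (fun t => rhs G r (Function.update x j t) i) (x j)

/-- The solution `α(t) = α₀ (α₀² - (α₀²-1) e^{-2μrt})^{-1/2}` of the Bernoulli ODE. -/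
noncomputable def alph (a0 mu r : ℝ) (t : ℝ) : ℝ :=
  a0 / Real.sqrt (a0 ^ 2 - (a0 ^ 2 - 1) * Real.exp (-(2 * mu * r * t)))

section Aux

variable {N : ℕ}

lemma ev_dot (i j : Fin N) (z : Fin N → ℝ) : ev i j ⬝ᵥ z = z i - z j := by
  simp [ev, sub_dotProduct, single_dotProduct]

/-- mulVec formula for a "Laplacian-shaped" matrix. -/
lemma mulVec_eq_aux (L : Matrix (Fin N) (Fin N) ℝ) (p : Fin N → Fin N → Prop)
    [inst : ∀ i j, Decidable (p i j)]
    (hL : ∀ i j, L i j = (if i = j then ∑ k, (if p i k then (1:ℝ) else 0) else 0)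
      - (if p i j then 1 else 0)) (z : Fin N → ℝ) (i : Fin N) :
    (L *ᵥ z) i = ∑ j, (if p i j then z i - z j else 0) := by
  have hRHS : ∑ j, (if p i j then z i - z j else 0)
      = (∑ k, (if p i k then (1:ℝ) else 0)) * z i - ∑ j, (if p i j then z j else 0) := by
    rw [Finset.sum_mul, ← Finset.sum_sub_distrib]
    exact Finset.sum_congr rfl fun j _ => by by_cases h : p i j <;> simp [h]
  rw [hRHS]
  simp only [Matrix.mulVec, dotProduct, hL, sub_mul, ite_mul, one_mul, zero_mul]
  rw [Finset.sum_sub_distrib, Finset.sum_ite_eq, if_pos (Finset.mem_univ i)]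

/-- Quadratic form of a "Laplacian-shaped" matrix. -/
lemma quad_eq_aux (L : Matrix (Fin N) (Fin N) ℝ) (p : Fin N → Fin N → Prop)
    [inst : ∀ i j, Decidable (p i j)]
    (hL : ∀ i j, L i j = (if i = j then ∑ k, (if p i k then (1:ℝ) else 0) else 0)
      - (if p i j then 1 else 0)) (hsymm : ∀ i j, p i j ↔ p j i) (z : Fin N → ℝ) :
    z ⬝ᵥ (L *ᵥ z) = (1/2) * ∑ i, ∑ j, (if p i j then (z i - z j)^2 else 0) := by
  have key : z ⬝ᵥ (L *ᵥ z) = ∑ i, ∑ j, (if p i j then z i * (z i - z j) else 0) := by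
    simp only [dotProduct, mulVec_eq_aux L p hL z, Finset.mul_sum, mul_ite, mul_zero]
  have flip : (∑ i, ∑ j, (if p i j then z i * (z i - z j) else 0))
      = ∑ i : Fin N, ∑ j, (if p i j then z j * (z j - z i) else 0) := by
    rw [Finset.sum_comm]
    exact Finset.sum_congr rfl fun a _ => Finset.sum_congr rfl fun b _ =>
      if_congr (hsymm b a) rfl rfl
  have two : 2 * (z ⬝ᵥ (L *ᵥ z)) = ∑ i, ∑ j, (if p i j then (z i - z j)^2 else 0) := by
    calc 2 * (z ⬝ᵥ (L *ᵥ z))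
        = (∑ i, ∑ j, (if p i j then z i * (z i - z j) else 0))
          + ∑ i : Fin N, ∑ j, (if p i j then z j * (z j - z i) else 0) := by
          rw [← flip, ← key]; ring
      _ = ∑ i, ∑ j, (if p i j then (z i - z j)^2 else 0) := by
          rw [← Finset.sum_add_distrib]
          refine Finset.sum_congr rfl fun a _ => ?_
          rw [← Finset.sum_add_distrib]
          refine Finset.sum_congr rfl fun b _ => ?_
          split <;> ring
  linarith

lemma lap_hL (G : SimpleGraph (Fin N)) (i j : Fin N) : lap G i j =
    (if i = j then ∑ k, (if G.Adj i k then (1:ℝ) else 0) else 0)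
      - (if G.Adj i j then 1 else 0) := by
  by_cases h : i = j
  · subst h
    have hnb : G.neighborFinset i = Finset.univ.filter (fun k => G.Adj i k) := by
      ext k; simp
    have : (G.degree i : ℝ) = ∑ k, (if G.Adj i k then (1:ℝ) else 0) := by
      rw [SimpleGraph.degree, hnb, Finset.card_filter]
      push_cast [apply_ite (Nat.cast : ℕ → ℝ)]
      rfl
    simp [lap, this, SimpleGraph.irrefl]
  · simp only [lap, if_neg h]
    split <;> ring

lemma lapEq_hL (G : SimpleGraph (Fin N)) (x : Fin N → ℝ) (i j : Fin N) : lapEq G x i j =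
    (if i = j then ∑ k, (if G.Adj i k ∧ x i = x k then (1:ℝ) else 0) else 0)
      - (if G.Adj i j ∧ x i = x j then 1 else 0) := by
  by_cases h : i = j
  · subst h
    have hnb : (G.neighborFinset i).filter (fun k => x i = x k)
        = Finset.univ.filter (fun k => G.Adj i k ∧ x i = x k) := by
      ext k; simp
    have : ((((G.neighborFinset i).filter (fun k => x i = x k)).card : ℕ) : ℝ)
        = ∑ k, (if G.Adj i k ∧ x i = x k then (1:ℝ) else 0) := by
      rw [hnb, Finset.card_filter]
      push_cast [apply_ite (Nat.cast : ℕ → ℝ)]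
      rfl
    have hne : ¬ (G.Adj i i ∧ x i = x i) := fun hc => G.irrefl hc.1
    rw [if_pos rfl, if_neg hne, sub_zero, ← this]
    simp [lapEq]
  · simp only [lapEq, if_neg h]
    split <;> ring

lemma lapNe_hL (G : SimpleGraph (Fin N)) (x : Fin N → ℝ) (i j : Fin N) : lapNe G x i j =
    (if i = j then ∑ k, (if G.Adj i k ∧ x i ≠ x k then (1:ℝ) else 0) else 0)
      - (if G.Adj i j ∧ x i ≠ x j then 1 else 0) := by
  by_cases h : i = j
  · subst h
    have hnb : (G.neighborFinset i).filter (fun k => x i ≠ x k)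
        = Finset.univ.filter (fun k => G.Adj i k ∧ x i ≠ x k) := by
      ext k; simp
    have : ((((G.neighborFinset i).filter (fun k => x i ≠ x k)).card : ℕ) : ℝ)
        = ∑ k, (if G.Adj i k ∧ x i ≠ x k then (1:ℝ) else 0) := by
      rw [hnb, Finset.card_filter]
      push_cast [apply_ite (Nat.cast : ℕ → ℝ)]
      rfl
    have hne : ¬ (G.Adj i i ∧ x i ≠ x i) := fun hc => G.irrefl hc.1
    rw [if_pos rfl, if_neg hne, sub_zero, ← this]
    simp [lapNe]
  · simp only [lapNe, if_neg h]
    split <;> ring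

lemma lap_split (G : SimpleGraph (Fin N)) (x : Fin N → ℝ) :
    lap G = lapEq G x + lapNe G x := by
  ext i j
  rw [Matrix.add_apply, lap_hL, lapEq_hL, lapNe_hL]
  by_cases h : i = j
  · subst h
    have hthis : ∀ k, (if G.Adj i k then (1:ℝ) else 0)
        = (if G.Adj i k ∧ x i = x k then (1:ℝ) else 0)
          + (if G.Adj i k ∧ x i ≠ x k then (1:ℝ) else 0) := by
      intro k
      by_cases ha : G.Adj i k
      · by_cases he : x i = x k <;> simp [ha, he]
      · simp [ha]
    have h1 : ¬ G.Adj i i := fun hc => G.irrefl hc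
    have h2 : ¬ (G.Adj i i ∧ x i = x i) := fun hc => G.irrefl hc.1
    have h3 : ¬ (G.Adj i i ∧ x i ≠ x i) := fun hc => G.irrefl hc.1
    rw [if_pos rfl, if_pos rfl, if_pos rfl, if_neg h1, if_neg h2, if_neg h3,
      sub_zero, sub_zero, sub_zero, ← Finset.sum_add_distrib]
    exact Finset.sum_congr rfl fun k _ => hthis k
  · simp only [if_neg h, zero_sub, zero_sub, zero_sub]
    by_cases ha : G.Adj i j
    · by_cases he : x i = x j <;> simp [ha, he]
    · simp [ha]

lemma lap_symm (G : SimpleGraph (Fin N)) : (lap G)ᵀ = lap G := by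
  ext i j
  simp only [Matrix.transpose_apply, lap]
  by_cases h : i = j
  · subst h; simp
  · rw [if_neg h, if_neg (Ne.symm h)]
    by_cases ha : G.Adj i j
    · rw [if_pos ha, if_pos (G.adj_symm ha)]
    · rw [if_neg ha, if_neg (fun hc => ha (G.adj_symm hc))]

lemma lapEq_symm (G : SimpleGraph (Fin N)) (x : Fin N → ℝ) :
    (lapEq G x)ᵀ = lapEq G x := by
  ext i j
  simp only [Matrix.transpose_apply, lapEq]
  by_cases h : i = j
  · subst h; simp
  · rw [if_neg h, if_neg (Ne.symm h)]
    by_cases ha : G.Adj i j ∧ x i = x j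
    · rw [if_pos ha, if_pos ⟨G.adj_symm ha.1, ha.2.symm⟩]
    · rw [if_neg ha, if_neg (fun hc => ha ⟨G.adj_symm hc.1, hc.2.symm⟩)]

lemma lapNe_symm (G : SimpleGraph (Fin N)) (x : Fin N → ℝ) :
    (lapNe G x)ᵀ = lapNe G x := by
  ext i j
  simp only [Matrix.transpose_apply, lapNe]
  by_cases h : i = j
  · subst h; simp
  · rw [if_neg h, if_neg (Ne.symm h)]
    by_cases ha : G.Adj i j ∧ x i ≠ x j
    · rw [if_pos ha, if_pos ⟨G.adj_symm ha.1, fun hc => ha.2 hc.symm⟩]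
    · rw [if_neg ha, if_neg (fun hc => ha ⟨G.adj_symm hc.1, fun he => hc.2 he.symm⟩)]

lemma lap_quad (G : SimpleGraph (Fin N)) (z : Fin N → ℝ) :
    z ⬝ᵥ (lap G *ᵥ z) = (1/2) * ∑ i, ∑ j, (if G.Adj i j then (z i - z j)^2 else 0) :=
  quad_eq_aux (lap G) (fun a b => G.Adj a b) (lap_hL G) (fun a b => G.adj_comm a b) z

lemma lapEq_quad (G : SimpleGraph (Fin N)) (x : Fin N → ℝ) (z : Fin N → ℝ) :
    z ⬝ᵥ (lapEq G x *ᵥ z)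
      = (1/2) * ∑ i, ∑ j, (if G.Adj i j ∧ x i = x j then (z i - z j)^2 else 0) :=
  quad_eq_aux (lapEq G x) (fun a b => G.Adj a b ∧ x a = x b) (lapEq_hL G x)
    (fun a b => ⟨fun h => ⟨G.adj_symm h.1, h.2.symm⟩, fun h => ⟨G.adj_symm h.1, h.2.symm⟩⟩) z

lemma lap_quad_nonneg (G : SimpleGraph (Fin N)) (z : Fin N → ℝ) :
    0 ≤ z ⬝ᵥ (lap G *ᵥ z) := by
  rw [lap_quad]
  have h : (0:ℝ) ≤ ∑ i, ∑ j, (if G.Adj i j then (z i - z j)^2 else 0) := by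
    refine Finset.sum_nonneg fun i _ => Finset.sum_nonneg fun j _ => ?_
    split
    · positivity
    · exact le_refl 0
  linarith

lemma adj_eq_of_quad_zero (G : SimpleGraph (Fin N)) {z : Fin N → ℝ}
    (hq : z ⬝ᵥ (lap G *ᵥ z) = 0) : ∀ a b, G.Adj a b → z a = z b := by
  rw [lap_quad] at hq
  have hsum : (∑ i, ∑ j, (if G.Adj i j then (z i - z j)^2 else 0)) = 0 := by linarith
  have hnn : ∀ i ∈ (Finset.univ : Finset (Fin N)), ∀ j ∈ (Finset.univ : Finset (Fin N)),
      (0:ℝ) ≤ (if G.Adj i j then (z i - z j)^2 else 0) := by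
    intro i _ j _; split
    · positivity
    · exact le_refl 0
  intro a b hab
  have h1 := (Finset.sum_eq_zero_iff_of_nonneg
    (fun i hi => Finset.sum_nonneg (hnn i hi))).mp hsum a (Finset.mem_univ a)
  have h2 := (Finset.sum_eq_zero_iff_of_nonneg (hnn a (Finset.mem_univ a))).mp h1 b
    (Finset.mem_univ b)
  rw [if_pos hab] at h2
  have := sq_eq_zero_iff.mp h2
  linarith

lemma const_of_mulVec_zero {G : SimpleGraph (Fin N)} (hG : G.Connected) {w : Fin N → ℝ}
    (hw : lap G *ᵥ w = 0) (i j : Fin N) : w i = w j := by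
  have hq : w ⬝ᵥ (lap G *ᵥ w) = 0 := by rw [hw]; simp
  have hadj := adj_eq_of_quad_zero G hq
  obtain ⟨p⟩ := hG.preconnected i j
  induction p with
  | nil => rfl
  | cons h _ ih => exact (hadj _ _ h).trans ih

lemma lap_quad_pos {G : SimpleGraph (Fin N)} (hG : G.Connected) {z : Fin N → ℝ}
    (hz : z ≠ 0) (hsum : ∑ k, z k = 0) : 0 < z ⬝ᵥ (lap G *ᵥ z) := by
  rcases lt_or_eq_of_le (lap_quad_nonneg G z) with h | h
  · exact h
  exfalso
  have hadj := adj_eq_of_quad_zero G h.symm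
  have hconst : ∀ a b : Fin N, z a = z b := by
    intro a b
    obtain ⟨p⟩ := hG.preconnected a b
    induction p with
    | nil => rfl
    | cons h _ ih => exact (hadj _ _ h).trans ih
  have : Nonempty (Fin N) := hG.nonempty
  obtain ⟨i0⟩ := this
  have hz0 : z i0 = 0 := by
    have : ∑ k, z k = (N : ℝ) * z i0 := by
      rw [Finset.sum_congr rfl fun k _ => hconst k i0]
      simp [Finset.card_univ, mul_comm]
    rw [this] at hsum
    have hN : (0:ℝ) < (N : ℝ) := by
      have : 0 < N := i0.pos
      exact_mod_cast this
    have := mul_eq_zero.mp hsum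
    rcases this with h' | h'
    · exact absurd h' (ne_of_gt hN)
    · exact h'
  exact hz (funext fun a => by rw [hconst a i0, hz0]; rfl)

lemma dot_mulVec_symm {A : Matrix (Fin N) (Fin N) ℝ} (hA : Aᵀ = A) (u w : Fin N → ℝ) :
    (A *ᵥ u) ⬝ᵥ w = u ⬝ᵥ (A *ᵥ w) := by
  rw [Matrix.dotProduct_mulVec, ← Matrix.mulVec_transpose, hA]

lemma mp_transpose_eq {Q Qp : Matrix (Fin N) (Fin N) ℝ} (hQ : Qᵀ = Q) (h : IsMP Q Qp) :
    Qpᵀ = Qp := by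
  obtain ⟨h1, h2, h3, h4⟩ := h
  have t3 : Qpᵀ * Q = Q * Qp := by
    calc Qpᵀ * Q = Qpᵀ * Qᵀ := by rw [hQ]
      _ = (Q * Qp)ᵀ := (Matrix.transpose_mul Q Qp).symm
      _ = Q * Qp := h3
  have t4 : Q * Qpᵀ = Qp * Q := by
    calc Q * Qpᵀ = Qᵀ * Qpᵀ := by rw [hQ]
      _ = (Qp * Q)ᵀ := (Matrix.transpose_mul Qp Q).symm
      _ = Qp * Q := h4
  have t1 : Q * Qpᵀ * Q = Q := by
    have h := congrArg Matrix.transpose h1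
    rw [Matrix.transpose_mul, Matrix.transpose_mul, hQ] at h
    rw [Matrix.mul_assoc]
    exact h
  have t2 : Qpᵀ * Q * Qpᵀ = Qpᵀ := by
    have h := congrArg Matrix.transpose h2
    rw [Matrix.transpose_mul, Matrix.transpose_mul, hQ] at h
    rw [Matrix.mul_assoc]
    exact h
  have step1 : Q * Qpᵀ = Q * Qp := by
    calc Q * Qpᵀ = Qp * Q := t4
      _ = Qp * (Q * Qpᵀ * Q) := by rw [t1]
      _ = (Qp * Q) * (Qpᵀ * Q) := by simp only [Matrix.mul_assoc]
      _ = (Q * Qpᵀ) * (Q * Qp) := by rw [← t4, t3]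
      _ = (Q * Qpᵀ * Q) * Qp := by simp only [Matrix.mul_assoc]
      _ = Q * Qp := by rw [t1]
  have step2 : Qpᵀ * Q = Qp * Q := by
    calc Qpᵀ * Q = Q * Qp := t3
      _ = (Q * Qpᵀ * Q) * Qp := by rw [t1]
      _ = (Q * Qpᵀ) * (Q * Qp) := by simp only [Matrix.mul_assoc]
      _ = (Qp * Q) * (Qpᵀ * Q) := by rw [t4, ← t3]
      _ = Qp * (Q * Qpᵀ * Q) := by simp only [Matrix.mul_assoc]
      _ = Qp * Q := by rw [t1]
  calc Qpᵀ = Qpᵀ * Q * Qpᵀ := t2.symm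
    _ = Qp * Q * Qpᵀ := by rw [step2]
    _ = Qp * (Q * Qpᵀ) := Matrix.mul_assoc _ _ _
    _ = Qp * (Q * Qp) := by rw [step1]
    _ = Qp * Q * Qp := (Matrix.mul_assoc _ _ _).symm
    _ = Qp := h2

/-- Cauchy–Schwarz for a symmetric PSD bilinear form. -/
lemma cs_aux {B : Matrix (Fin N) (Fin N) ℝ} (hB : Bᵀ = B)
    (hpsd : ∀ u : Fin N → ℝ, 0 ≤ u ⬝ᵥ (B *ᵥ u)) (u w : Fin N → ℝ) :
    (u ⬝ᵥ (B *ᵥ w))^2 ≤ (u ⬝ᵥ (B *ᵥ u)) * (w ⬝ᵥ (B *ᵥ w)) := by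
  have hswap : w ⬝ᵥ (B *ᵥ u) = u ⬝ᵥ (B *ᵥ w) := by
    rw [← dot_mulVec_symm hB, dotProduct_comm]
  have key : ∀ t : ℝ, 0 ≤ (w ⬝ᵥ (B *ᵥ w)) * (t*t)
      + (2 * (u ⬝ᵥ (B *ᵥ w))) * t + (u ⬝ᵥ (B *ᵥ u)) := by
    intro t
    have h0 := hpsd (u + t • w)
    rw [Matrix.mulVec_add, Matrix.mulVec_smul, dotProduct_add, add_dotProduct,
      add_dotProduct, dotProduct_smul, smul_dotProduct,
      smul_dotProduct, dotProduct_smul] at h0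
    simp only [smul_eq_mul] at h0
    rw [hswap] at h0
    nlinarith [h0]
  have hd := discrim_le_zero key
  rw [discrim] at hd
  nlinarith [hd]

lemma qp_psd {G : SimpleGraph (Fin N)} {Qp : Matrix (Fin N) (Fin N) ℝ}
    (hmp : IsMP (lap G) Qp) (hQpT : Qpᵀ = Qp) (u : Fin N → ℝ) :
    0 ≤ u ⬝ᵥ (Qp *ᵥ u) := by
  have heq : u ⬝ᵥ (Qp *ᵥ u) = (Qp *ᵥ u) ⬝ᵥ (lap G *ᵥ (Qp *ᵥ u)) := by
    calc u ⬝ᵥ (Qp *ᵥ u) = u ⬝ᵥ ((Qp * lap G * Qp) *ᵥ u) := by rw [hmp.2.1]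
      _ = u ⬝ᵥ (Qp *ᵥ (lap G *ᵥ (Qp *ᵥ u))) := by
          rw [Matrix.mulVec_mulVec, Matrix.mulVec_mulVec]
      _ = (Qp *ᵥ u) ⬝ᵥ (lap G *ᵥ (Qp *ᵥ u)) := by rw [← dot_mulVec_symm hQpT]
  rw [heq]
  exact lap_quad_nonneg G _

lemma ev_dot_proj {G : SimpleGraph (Fin N)} (hG : G.Connected)
    {Qp : Matrix (Fin N) (Fin N) ℝ} (hmp : IsMP (lap G) Qp) (z : Fin N → ℝ) (i j : Fin N) :
    ev i j ⬝ᵥ z = ev i j ⬝ᵥ (Qp *ᵥ (lap G *ᵥ z)) := by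
  set w : Fin N → ℝ := z - Qp *ᵥ (lap G *ᵥ z) with hwdef
  have hw : lap G *ᵥ w = 0 := by
    rw [hwdef, Matrix.mulVec_sub, Matrix.mulVec_mulVec, Matrix.mulVec_mulVec, hmp.1, sub_self]
  have hc := const_of_mulVec_zero hG hw i j
  have h0 : ev i j ⬝ᵥ w = 0 := by
    rw [ev_dot]
    simpa [sub_eq_zero] using hc
  rw [hwdef, dotProduct_sub] at h0
  linarith

lemma hasPosEig_of_quad {M : Matrix (Fin N) (Fin N) ℝ} (hM : M.IsHermitian)
    (z : Fin N → ℝ) (hz : 0 < z ⬝ᵥ (M *ᵥ z)) : HasPosEig M := by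
  by_contra hcon
  have hle : ∀ i, hM.eigenvalues i ≤ 0 := by
    intro i
    by_contra hpos
    push_neg at hpos
    exact hcon ⟨hM.eigenvalues i, hM.eigenvectorBasis i, hpos,
      (by simpa using hM.eigenvectorBasis.orthonormal.ne_zero i), hM.mulVec_eigenvectorBasis i⟩
  set U : Matrix (Fin N) (Fin N) ℝ := (hM.eigenvectorUnitary : Matrix (Fin N) (Fin N) ℝ)
    with hU
  have hstar : (star U : Matrix (Fin N) (Fin N) ℝ) = Uᵀ := by
    rw [Matrix.star_eq_conjTranspose, Matrix.conjTranspose_eq_transpose_of_trivial]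
  set y : Fin N → ℝ := Uᵀ *ᵥ z with hy
  have hform : z ⬝ᵥ (M *ᵥ z)
      = y ⬝ᵥ ((Matrix.diagonal (RCLike.ofReal ∘ hM.eigenvalues) : Matrix (Fin N) (Fin N) ℝ)
          *ᵥ y) := by
    conv_lhs => rw [hM.spectral_theorem, Unitary.conjStarAlgAut_apply, ← hU]
    rw [hstar, ← Matrix.mulVec_mulVec, ← Matrix.mulVec_mulVec]
    rw [Matrix.dotProduct_mulVec z U, ← Matrix.mulVec_transpose]
  have hnonpos : y ⬝ᵥ ((Matrix.diagonal (RCLike.ofReal ∘ hM.eigenvalues)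
      : Matrix (Fin N) (Fin N) ℝ) *ᵥ y) ≤ 0 := by
    rw [dotProduct]
    refine Finset.sum_nonpos fun i _ => ?_
    rw [Matrix.mulVec_diagonal]
    have hofreal : (RCLike.ofReal ∘ hM.eigenvalues) i = hM.eigenvalues i := by
      simp [RCLike.ofReal_real_eq_id]
    rw [hofreal]
    nlinarith [hle i, mul_self_nonneg (y i)]
  rw [hform] at hz
  linarith

end Aux

/-- mixed stationary state stability: sum of effective resistances of
consensus edges below `2/3` implies stability; a consensus edge with effective resistance
above `2/3` implies instability. (Each consensus edge appears twice among ordered pairs,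
whence the factor `1/2`.) -/
theorem stmt_10 {N : ℕ} (G : SimpleGraph (Fin N)) (hG : G.Connected) (r : ℝ) (hr : 0 < r)
    (x : Fin N → ℝ) (hx : DetailedBalance G r x)
    (Qp : Matrix (Fin N) (Fin N) ℝ) (hQp : IsMP (lap G) Qp) :
    ((1 / 2 : ℝ) * ∑ i, ∑ j ∈ (G.neighborFinset i).filter (fun j => x i = x j),
        effRes Qp i j < 2 / 3 →
      NegDefOrth (r • (lapEq G x - (2 : ℝ) • lapNe G x))) ∧
    ((∃ i j, G.Adj i j ∧ x i = x j ∧ 2 / 3 < effRes Qp i j) →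
      HasPosEig (r • (lapEq G x - (2 : ℝ) • lapNe G x))) := by
  have hQsym := lap_symm G
  have hQpT := mp_transpose_eq hQsym hQp
  have hQppsd := qp_psd hQp hQpT
  have hM : ∀ z : Fin N → ℝ, z ⬝ᵥ ((r • (lapEq G x - (2:ℝ) • lapNe G x)) *ᵥ z)
      = r * (3 * (z ⬝ᵥ (lapEq G x *ᵥ z)) - 2 * (z ⬝ᵥ (lap G *ᵥ z))) := by
    intro z
    have hsplit : z ⬝ᵥ (lap G *ᵥ z)
        = z ⬝ᵥ (lapEq G x *ᵥ z) + z ⬝ᵥ (lapNe G x *ᵥ z) := by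
      rw [lap_split G x, Matrix.add_mulVec, dotProduct_add]
    rw [Matrix.smul_mulVec, dotProduct_smul, smul_eq_mul,
      Matrix.sub_mulVec, dotProduct_sub, Matrix.smul_mulVec,
      dotProduct_smul, smul_eq_mul, hsplit]
    ring
  constructor
  · -- stability
    intro hC z hz hsum
    have hQpos := lap_quad_pos hG hz hsum
    have hterm : ∀ i j : Fin N, (if G.Adj i j ∧ x i = x j then (z i - z j)^2 else 0)
        ≤ (if G.Adj i j ∧ x i = x j then effRes Qp i j else 0) * (z ⬝ᵥ (lap G *ᵥ z)) := by
      intro i j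
      rw [ite_mul, zero_mul]
      split
      · have he : z i - z j = ev i j ⬝ᵥ (Qp *ᵥ (lap G *ᵥ z)) := by
          rw [← ev_dot_proj hG hQp z i j, ev_dot]
        have hcs := cs_aux hQpT hQppsd (ev i j) (lap G *ᵥ z)
        have hQQ : (lap G *ᵥ z) ⬝ᵥ (Qp *ᵥ (lap G *ᵥ z)) = z ⬝ᵥ (lap G *ᵥ z) := by
          rw [dot_mulVec_symm hQsym, Matrix.mulVec_mulVec, Matrix.mulVec_mulVec, hQp.1]
        calc (z i - z j)^2 = (ev i j ⬝ᵥ (Qp *ᵥ (lap G *ᵥ z)))^2 := by rw [he]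
          _ ≤ (ev i j ⬝ᵥ (Qp *ᵥ ev i j)) * (z ⬝ᵥ (lap G *ᵥ z)) := by rw [← hQQ]; exact hcs
          _ = effRes Qp i j * (z ⬝ᵥ (lap G *ᵥ z)) := rfl
      · exact le_refl 0
    have hCsum : (∑ i, ∑ j ∈ (G.neighborFinset i).filter (fun j => x i = x j), effRes Qp i j)
        = ∑ i, ∑ j, (if G.Adj i j ∧ x i = x j then effRes Qp i j else 0) := by
      refine Finset.sum_congr rfl fun i _ => ?_
      have hnb : (G.neighborFinset i).filter (fun j => x i = x j)
          = Finset.univ.filter (fun j => G.Adj i j ∧ x i = x j) := by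
        ext k; simp
      rw [hnb, Finset.sum_filter]
    rw [hCsum] at hC
    set S := ∑ i, ∑ j, (if G.Adj i j ∧ x i = x j then effRes Qp i j else 0) with hS
    have hzE : z ⬝ᵥ (lapEq G x *ᵥ z) ≤ (1/2 : ℝ) * (S * (z ⬝ᵥ (lap G *ᵥ z))) := by
      rw [lapEq_quad]
      have hs : (∑ i, ∑ j, if G.Adj i j ∧ x i = x j then (z i - z j)^2 else 0)
          ≤ ∑ i, ∑ j,
            (if G.Adj i j ∧ x i = x j then effRes Qp i j else 0) * (z ⬝ᵥ (lap G *ᵥ z)) :=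
        Finset.sum_le_sum fun i _ => Finset.sum_le_sum fun j _ => hterm i j
      have hpull : (∑ i, ∑ j : Fin N,
            (if G.Adj i j ∧ x i = x j then effRes Qp i j else 0) * (z ⬝ᵥ (lap G *ᵥ z)))
          = S * (z ⬝ᵥ (lap G *ᵥ z)) := by
        rw [hS, Finset.sum_mul]
        exact Finset.sum_congr rfl fun i _ => (Finset.sum_mul _ _ _).symm
      rw [hpull] at hs
      linarith
    rw [hM z]
    have hmul : ((1/2 : ℝ) * S) * (z ⬝ᵥ (lap G *ᵥ z)) < (2/3 : ℝ) * (z ⬝ᵥ (lap G *ᵥ z)) :=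
      mul_lt_mul_of_pos_right hC hQpos
    nlinarith [hzE, hQpos, hr, hmul, mul_pos hr hQpos]
  · -- instability
    rintro ⟨i, j, hadj, heq, hres⟩
    set z : Fin N → ℝ := Qp *ᵥ ev i j with hzdef
    have ha2 : z ⬝ᵥ (lap G *ᵥ z) = effRes Qp i j := by
      calc z ⬝ᵥ (lap G *ᵥ z)
          = ev i j ⬝ᵥ (Qp *ᵥ (lap G *ᵥ (Qp *ᵥ ev i j))) := dot_mulVec_symm hQpT _ _
        _ = ev i j ⬝ᵥ ((Qp * lap G * Qp) *ᵥ ev i j) := by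
            rw [Matrix.mulVec_mulVec, Matrix.mulVec_mulVec]
        _ = effRes Qp i j := by rw [hQp.2.1]; rfl
    have hzij : z i - z j = effRes Qp i j := by
      rw [← ev_dot i j z]; rfl
    have hij : i ≠ j := G.ne_of_adj hadj
    have hzE : effRes Qp i j ^ 2 ≤ z ⬝ᵥ (lapEq G x *ᵥ z) := by
      rw [lapEq_quad]
      have hnnb : ∀ a b : Fin N,
          (0:ℝ) ≤ (if G.Adj a b ∧ x a = x b then (z a - z b)^2 else 0) := by
        intro a b; split
        · positivity
        · exact le_refl 0
      have hnn : ∀ a ∈ (Finset.univ : Finset (Fin N)),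
          (0:ℝ) ≤ ∑ b, (if G.Adj a b ∧ x a = x b then (z a - z b)^2 else 0) :=
        fun a _ => Finset.sum_nonneg fun b _ => hnnb a b
      have hbig := Finset.sum_le_sum_of_subset_of_nonneg
        (Finset.subset_univ ({i, j} : Finset (Fin N)))
        (fun a _ _ => hnn a (Finset.mem_univ a))
        (f := fun a => ∑ b, (if G.Adj a b ∧ x a = x b then (z a - z b)^2 else 0))
      rw [Finset.sum_pair hij] at hbig
      have hi1 : (if G.Adj i j ∧ x i = x j then (z i - z j)^2 else 0)
          ≤ ∑ b, (if G.Adj i b ∧ x i = x b then (z i - z b)^2 else 0) :=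
        Finset.single_le_sum (fun b _ => hnnb i b) (Finset.mem_univ j)
      have hj1 : (if G.Adj j i ∧ x j = x i then (z j - z i)^2 else 0)
          ≤ ∑ b, (if G.Adj j b ∧ x j = x b then (z j - z b)^2 else 0) :=
        Finset.single_le_sum (fun b _ => hnnb j b) (Finset.mem_univ i)
      rw [if_pos ⟨hadj, heq⟩, hzij] at hi1
      rw [if_pos ⟨G.adj_symm hadj, heq.symm⟩] at hj1
      have hji : (z j - z i)^2 = effRes Qp i j ^ 2 := by
        rw [← hzij]; ring
      rw [hji] at hj1
      nlinarith [hi1, hj1, hbig, sq_nonneg (effRes Qp i j)]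
    have hω0 : (0:ℝ) < effRes Qp i j := lt_trans (by norm_num) hres
    have hquad : 0 < z ⬝ᵥ ((r • (lapEq G x - (2:ℝ) • lapNe G x)) *ᵥ z) := by
      rw [hM z, ha2]
      have h32 : (0:ℝ) < 3 * effRes Qp i j - 2 := by linarith
      nlinarith [hzE, mul_pos hω0 h32, hr, mul_pos hr (mul_pos hω0 h32)]
    have hHerm : (r • (lapEq G x - (2:ℝ) • lapNe G x)).IsHermitian := by
      rw [Matrix.IsHermitian, Matrix.conjTranspose_eq_transpose_of_trivial,
        Matrix.transpose_smul, Matrix.transpose_sub, Matrix.transpose_smul,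
        lapEq_symm, lapNe_symm]
    exact hasPosEig_of_quad hHerm z hquad
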